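/- Let N ≥ 1, c₀ > 0, and let 𝕋 = ℤ/Nℤ. Let F : 𝕋 × 𝕋 → ℂ satisfy F(x,y) = conj(F(y,x)) for all x, y ∈ 𝕋, and define the linear map Φ on N×N complex matrices indexed by 𝕋 by (Φ[R])_{ab} = ∑_{c,d ∈ 𝕋} F(a−c, b−d) R_{cd}. Assume that for all φ, θ ∈ [0,1] the discrete Fourier transform F̂(φ,θ) := ∑_{x,y ∈ 𝕋} F(x,y) · exp(2πi (x̃·φ − ỹ·θ)) is real and satisfies F̂(φ,θ) ≥ c₀, where x̃ ∈ {0,…,N−1} denotes the integer representative of x. Then for every Hermitian matrix R indexed by 𝕋 one has Tr(R · Φ[R]) ≥ c₀ · Tr(R²); equivalently, Φ ≥ c₀ on Hermitian matrices. -/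

import Mathlib

open Matrix
open scoped ComplexConjugate

open Finset in
noncomputable def psi (N : ℕ) (m : ℤ) : ℂ := Complex.exp (2 * Real.pi * Complex.I * m / N)

lemma psi_add (N : ℕ) (m n : ℤ) : psi N (m + n) = psi N m * psi N n := by
  rw [psi, psi, psi, ← Complex.exp_add]
  congr 1
  push_cast
  ring

lemma psi_zero (N : ℕ) : psi N 0 = 1 := by simp [psi]

lemma psi_neg (N : ℕ) (m : ℤ) : psi N (-m) = conj (psi N m) := by
  rw [psi, psi, ← Complex.exp_conj]
  congr 1
  simp only [map_div₀, _root_.map_mul, Complex.conj_I, Complex.conj_ofNat, Complex.conj_natCast,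
    Complex.conj_ofReal, map_intCast]
  push_cast
  ring

lemma psi_int_mul (N : ℕ) [NeZero N] (k : ℤ) : psi N (N * k) = 1 := by
  rw [psi]
  have hN : (N:ℂ) ≠ 0 := Nat.cast_ne_zero.mpr (NeZero.ne N)
  have : 2 * Real.pi * Complex.I * ((N * k : ℤ) : ℂ) / N = k * (2 * Real.pi * Complex.I) := by
    push_cast
    field_simp
  rw [this, Complex.exp_int_mul_two_pi_mul_I]

lemma psi_congr (N : ℕ) [NeZero N] (m n : ℤ) (h : (m : ZMod N) = n) : psi N m = psi N n := by
  have : (N:ℤ) ∣ m - n := by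
    rwa [← ZMod.intCast_zmod_eq_zero_iff_dvd, Int.cast_sub, sub_eq_zero]
  obtain ⟨k, hk⟩ := this
  have : m = n + N * k := by omega
  rw [this, psi_add, psi_int_mul, mul_one]

lemma psi_nat_mul (N : ℕ) (m : ℤ) (j : ℕ) : psi N (m * j) = psi N m ^ j := by
  rw [psi, psi, ← Complex.exp_nat_mul]
  congr 1
  push_cast
  ring

lemma psi_ne_one (N : ℕ) [NeZero N] (t : ZMod N) (ht : t ≠ 0) : psi N t.val ≠ 1 := by
  rw [psi]
  intro h
  rw [Complex.exp_eq_one_iff] at h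
  obtain ⟨n, hn⟩ := h
  have hN : (N:ℂ) ≠ 0 := Nat.cast_ne_zero.mpr (NeZero.ne N)
  have hpi : (Real.pi : ℂ) ≠ 0 := Complex.ofReal_ne_zero.mpr Real.pi_ne_zero
  have h2 : (2 : ℂ) * Real.pi * Complex.I ≠ 0 := by
    simp [hpi, Complex.I_ne_zero]
  have hval : ((t.val : ℂ)) = n * N := by
    field_simp at hn
    apply mul_left_cancel₀ h2
    push_cast [-ZMod.natCast_val] at hn ⊢
    linear_combination (2 * (Real.pi:ℂ) * Complex.I) * hn
  have h2' : (t.val : ℤ) = n * N := by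
    have key : (((t.val : ℤ)) : ℂ) = ((n * (N:ℤ) : ℤ) : ℂ) := by push_cast [-ZMod.natCast_val]; exact hval
    exact_mod_cast Int.cast_injective key
  have hdvd : (N:ℤ) ∣ (t.val : ℤ) := ⟨n, by linarith⟩
  have h3 : t.val ≠ 0 := fun h => ht ((ZMod.val_eq_zero t).mp h)
  have h4 : t.val < N := ZMod.val_lt t
  have h5 : (N:ℤ) ≤ (t.val : ℤ) := Int.le_of_dvd (by exact_mod_cast Nat.pos_of_ne_zero h3) hdvd
  omega

lemma psi_pow_N (N : ℕ) [NeZero N] (t : ZMod N) : psi N t.val ^ N = 1 := by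
  rw [← psi_nat_mul]
  have : ((t.val : ℤ)) * N = N * t.val := by ring
  rw [this, psi_int_mul]

lemma psi_sum (N : ℕ) [NeZero N] (t : ZMod N) :
    ∑ p : ZMod N, psi N (t.val * p.val) = if t = 0 then (N:ℂ) else 0 := by
  have hconv : ∑ p : ZMod N, psi N (t.val * p.val) = ∑ j ∈ Finset.range N, psi N t.val ^ j := by
    refine Finset.sum_nbij' (fun p => p.val) (fun j => (j : ZMod N)) ?_ ?_ ?_ ?_ ?_
    · intro p _; exact Finset.mem_range.mpr (ZMod.val_lt p)
    · intro j _; exact Finset.mem_univ _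
    · intro p _; exact ZMod.natCast_zmod_val p
    · intro j hj; exact ZMod.val_cast_of_lt (Finset.mem_range.mp hj)
    · intro p _; rw [← psi_nat_mul]
  rw [hconv]
  by_cases ht : t = 0
  · subst ht
    simp [ZMod.val_zero, psi_zero]
  · rw [geom_sum_eq (psi_ne_one N t ht), psi_pow_N, if_neg ht]
    simp

noncomputable def ee (N : ℕ) (X P : ZMod N × ZMod N) : ℂ :=
  psi N (X.1.val * P.1.val) * psi N (-(X.2.val * P.2.val))

lemma conj_psi (N : ℕ) (m : ℤ) : conj (psi N m) = psi N (-m) := (psi_neg N m).symm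

lemma ee_ortho (N : ℕ) [NeZero N] (X C A : ZMod N × ZMod N) :
    ∑ P : ZMod N × ZMod N, ee N X P * ee N C P * conj (ee N A P)
    = (if X.1 + C.1 - A.1 = 0 then (N:ℂ) else 0) *
      (if A.2 - X.2 - C.2 = 0 then (N:ℂ) else 0) := by
  have hterm : ∀ p q : ZMod N,
      ee N X (p, q) * ee N C (p, q) * conj (ee N A (p, q))
      = psi N ((X.1 + C.1 - A.1).val * p.val) * psi N ((A.2 - X.2 - C.2).val * q.val) := by
    intro p q
    simp only [ee, _root_.map_mul, conj_psi, neg_neg]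
    have collapse : ∀ m₁ m₂ m₃ m₄ m₅ m₆ : ℤ,
        psi N m₁ * psi N m₂ * (psi N m₃ * psi N m₄) * (psi N m₅ * psi N m₆)
        = psi N (m₁ + m₂ + m₃ + m₄ + m₅ + m₆) := by
      intro m₁ m₂ m₃ m₄ m₅ m₆
      simp only [psi_add]
      ring
    rw [collapse, ← psi_add]
    apply psi_congr
    push_cast [ZMod.natCast_val, ZMod.intCast_cast, ZMod.cast_id]
    ring
  calc ∑ P : ZMod N × ZMod N, ee N X P * ee N C P * conj (ee N A P)
      = ∑ p : ZMod N, ∑ q : ZMod N,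
          psi N ((X.1 + C.1 - A.1).val * p.val) * psi N ((A.2 - X.2 - C.2).val * q.val) := by
        rw [Fintype.sum_prod_type]
        exact Finset.sum_congr rfl fun p _ => Finset.sum_congr rfl fun q _ => hterm p q
    _ = (∑ p : ZMod N, psi N ((X.1 + C.1 - A.1).val * p.val)) *
        (∑ q : ZMod N, psi N ((A.2 - X.2 - C.2).val * q.val)) := by
        rw [Finset.sum_mul_sum]
    _ = _ := by rw [psi_sum, psi_sum]

lemma key_expand (N : ℕ) [NeZero N] (F R : Matrix (ZMod N) (ZMod N) ℂ) :
    ∑ P : ZMod N × ZMod N,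
      (∑ X : ZMod N × ZMod N, F X.1 X.2 * ee N X P) *
      ((∑ C : ZMod N × ZMod N, R C.1 C.2 * ee N C P) *
       conj (∑ A : ZMod N × ZMod N, R A.1 A.2 * ee N A P))
    = (N:ℂ)^2 * ∑ A : ZMod N × ZMod N, conj (R A.1 A.2) *
        (∑ C : ZMod N × ZMod N, F (A.1 - C.1) (A.2 - C.2) * R C.1 C.2) := by
  have hP : ∀ P : ZMod N × ZMod N,
      (∑ X : ZMod N × ZMod N, F X.1 X.2 * ee N X P) *
      ((∑ C : ZMod N × ZMod N, R C.1 C.2 * ee N C P) *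
       conj (∑ A : ZMod N × ZMod N, R A.1 A.2 * ee N A P))
      = ∑ X : ZMod N × ZMod N, ∑ C : ZMod N × ZMod N, ∑ A : ZMod N × ZMod N,
          (F X.1 X.2 * R C.1 C.2 * conj (R A.1 A.2)) *
          (ee N X P * ee N C P * conj (ee N A P)) := by
    intro P
    rw [map_sum]
    simp only [_root_.map_mul]
    rw [Finset.sum_mul_sum, Finset.sum_mul_sum]
    simp only [Finset.mul_sum]
    refine Finset.sum_congr rfl fun X _ => Finset.sum_congr rfl fun C _ =>
      Finset.sum_congr rfl fun A _ => by ring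
  simp only [hP]
  rw [Finset.sum_comm]
  have step2 : ∀ X : ZMod N × ZMod N,
      ∑ P : ZMod N × ZMod N, ∑ C : ZMod N × ZMod N, ∑ A : ZMod N × ZMod N,
        (F X.1 X.2 * R C.1 C.2 * conj (R A.1 A.2)) * (ee N X P * ee N C P * conj (ee N A P))
      = ∑ C : ZMod N × ZMod N, ∑ A : ZMod N × ZMod N,
          (F X.1 X.2 * R C.1 C.2 * conj (R A.1 A.2)) *
          ((if X.1 + C.1 - A.1 = 0 then (N:ℂ) else 0) *
           (if A.2 - X.2 - C.2 = 0 then (N:ℂ) else 0)) := by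
    intro X
    rw [Finset.sum_comm]
    refine Finset.sum_congr rfl fun C _ => ?_
    rw [Finset.sum_comm]
    refine Finset.sum_congr rfl fun A _ => ?_
    rw [← Finset.mul_sum, ee_ortho]
  simp only [step2]
  -- now evaluate the ifs; reorder sums so X is innermost
  rw [Finset.sum_comm]
  have step3 : ∀ C : ZMod N × ZMod N,
      ∑ X : ZMod N × ZMod N, ∑ A : ZMod N × ZMod N,
        (F X.1 X.2 * R C.1 C.2 * conj (R A.1 A.2)) *
        ((if X.1 + C.1 - A.1 = 0 then (N:ℂ) else 0) *
         (if A.2 - X.2 - C.2 = 0 then (N:ℂ) else 0))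
      = ∑ A : ZMod N × ZMod N,
          (N:ℂ)^2 * (F (A.1 - C.1) (A.2 - C.2) * R C.1 C.2 * conj (R A.1 A.2)) := by
    intro C
    rw [Finset.sum_comm]
    refine Finset.sum_congr rfl fun A _ => ?_
    rw [Fintype.sum_prod_type]
    have hif : ∀ x₁ x₂ : ZMod N,
        (F x₁ x₂ * R C.1 C.2 * conj (R A.1 A.2)) *
        ((if x₁ + C.1 - A.1 = 0 then (N:ℂ) else 0) *
         (if A.2 - x₂ - C.2 = 0 then (N:ℂ) else 0))
        = (if x₂ = A.2 - C.2 then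
            (if x₁ = A.1 - C.1 then
              (N:ℂ)^2 * (F x₁ x₂ * R C.1 C.2 * conj (R A.1 A.2)) else 0) else 0) := by
      intro x₁ x₂
      have e1 : (x₁ + C.1 - A.1 = 0) = (x₁ = A.1 - C.1) :=
        propext ⟨fun h => by linear_combination h, fun h => by linear_combination h⟩
      have e2 : (A.2 - x₂ - C.2 = 0) = (x₂ = A.2 - C.2) :=
        propext ⟨fun h => by linear_combination -h, fun h => by linear_combination -h⟩
      simp only [e1, e2]
      by_cases h1 : x₁ = A.1 - C.1 <;> by_cases h2 : x₂ = A.2 - C.2 <;>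
        simp [h1, h2] <;> ring
    simp only [hif, Finset.sum_ite_eq', Finset.mem_univ, if_true]
  simp only [step3]
  rw [Finset.sum_comm, Finset.mul_sum]
  refine Finset.sum_congr rfl fun A _ => ?_
  rw [Finset.mul_sum, Finset.mul_sum]
  exact Finset.sum_congr rfl fun C _ => by ring

lemma delta_sum_ee (N : ℕ) [NeZero N] (P : ZMod N × ZMod N) :
    ∑ X : ZMod N × ZMod N,
      (if X.1 = 0 ∧ X.2 = 0 then (1:ℂ) else 0) * ee N X P = 1 := by
  have h : ∀ X : ZMod N × ZMod N,
      (if X.1 = 0 ∧ X.2 = 0 then (1:ℂ) else 0) * ee N X P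
      = if X = ((0,0) : ZMod N × ZMod N) then ee N X P else 0 := by
    intro X
    by_cases h : X = ((0,0) : ZMod N × ZMod N)
    · rw [if_pos h, if_pos ⟨by rw [h], by rw [h]⟩, one_mul]
    · rw [if_neg h, if_neg, zero_mul]
      intro ⟨h1, h2⟩
      exact h (Prod.ext h1 h2)
  simp only [h, Finset.sum_ite_eq', Finset.mem_univ, if_true]
  simp [ee, ZMod.val_zero, psi_zero]

lemma parseval (N : ℕ) [NeZero N] (R : Matrix (ZMod N) (ZMod N) ℂ) :
    ∑ P : ZMod N × ZMod N,
      (∑ C : ZMod N × ZMod N, R C.1 C.2 * ee N C P) *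
       conj (∑ A : ZMod N × ZMod N, R A.1 A.2 * ee N A P)
    = (N:ℂ)^2 * ∑ A : ZMod N × ZMod N, conj (R A.1 A.2) * R A.1 A.2 := by
  have hkey := key_expand N (Matrix.of fun x y => if x = 0 ∧ y = 0 then (1:ℂ) else 0) R
  simp only [Matrix.of_apply] at hkey
  simp only [delta_sum_ee, one_mul] at hkey
  rw [hkey]
  congr 1
  refine Finset.sum_congr rfl fun A _ => ?_
  congr 1
  have h : ∀ C : ZMod N × ZMod N,
      (if A.1 - C.1 = 0 ∧ A.2 - C.2 = 0 then (1:ℂ) else 0) * R C.1 C.2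
      = if C = A then R C.1 C.2 else 0 := by
    intro C
    by_cases h : C = A
    · rw [if_pos h, if_pos ⟨by rw [h]; ring, by rw [h]; ring⟩, one_mul]
    · rw [if_neg h, if_neg, zero_mul]
      intro ⟨h1, h2⟩
      exact h (Prod.ext (by linear_combination -h1) (by linear_combination -h2))
  simp only [h, Finset.sum_ite_eq', Finset.mem_univ, if_true]

lemma ee_eq_exp (N : ℕ) [NeZero N] (x y p q : ZMod N) :
    Complex.exp (2 * Real.pi * Complex.I *
      (((x.val : ℕ) : ℂ) * ((((p.val : ℝ)/(N:ℝ)) : ℝ) : ℂ) -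
       ((y.val : ℕ) : ℂ) * ((((q.val : ℝ)/(N:ℝ)) : ℝ) : ℂ)))
    = ee N (x, y) (p, q) := by
  rw [ee, psi, psi, ← Complex.exp_add]
  congr 1
  have hN : (N:ℂ) ≠ 0 := Nat.cast_ne_zero.mpr (NeZero.ne N)
  push_cast
  field_simp
  ring

/-- A translation-invariant filtering on the discrete torus, given by convolution with a
kernel `F` satisfying `F(x,y) = conj F(y,x)`, is bounded below by `c₀` on Hermitian
matrices as soon as its discrete Fourier transform is bounded below by `c₀`:
`Tr(R·Φ[R]) ≥ c₀·Tr(R²)` for every Hermitian `R`. -/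
theorem convolution_filtering_lower_bound
    (N : ℕ) [NeZero N] (c₀ : ℝ) (hc₀ : 0 < c₀)
    (F : ZMod N → ZMod N → ℂ)
    (hF : ∀ x y : ZMod N, F x y = conj (F y x))
    (Φ : Matrix (ZMod N) (ZMod N) ℂ → Matrix (ZMod N) (ZMod N) ℂ)
    (hΦ : ∀ R : Matrix (ZMod N) (ZMod N) ℂ, ∀ a b : ZMod N,
      Φ R a b = ∑ c : ZMod N, ∑ d : ZMod N, F (a - c) (b - d) * R c d)
    (hFourier : ∀ φ θ : ℝ, φ ∈ Set.Icc (0:ℝ) 1 → θ ∈ Set.Icc (0:ℝ) 1 →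
      (∑ x : ZMod N, ∑ y : ZMod N, F x y *
          Complex.exp (2 * Real.pi * Complex.I *
            (((x.val : ℕ) : ℂ) * (φ : ℂ) - ((y.val : ℕ) : ℂ) * (θ : ℂ)))).im = 0 ∧
      c₀ ≤ (∑ x : ZMod N, ∑ y : ZMod N, F x y *
          Complex.exp (2 * Real.pi * Complex.I *
            (((x.val : ℕ) : ℂ) * (φ : ℂ) - ((y.val : ℕ) : ℂ) * (θ : ℂ)))).re) :
    ∀ R : Matrix (ZMod N) (ZMod N) ℂ, R.IsHermitian →
      ((R * Φ R).trace).im = 0 ∧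
      c₀ * ((R * R).trace).re ≤ ((R * Φ R).trace).re := by
  intro R hR
  have hRconj : ∀ a b : ZMod N, conj (R a b) = R b a := fun a b => hR.apply b a
  set Sf : ZMod N × ZMod N → ℂ :=
    fun P => ∑ C : ZMod N × ZMod N, R C.1 C.2 * ee N C P with hSf
  set G : ZMod N × ZMod N → ℂ :=
    fun P => ∑ X : ZMod N × ZMod N, F X.1 X.2 * ee N X P with hGdef
  set w : ZMod N × ZMod N → ℝ := fun P => Complex.normSq (Sf P) with hw
  have hwconj : ∀ P, Sf P * conj (Sf P) = ((w P : ℝ) : ℂ) := fun P => Complex.mul_conj _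
  have hwnn : ∀ P, 0 ≤ w P := fun P => Complex.normSq_nonneg _
  have h0N : (0:ℝ) < N := by
    exact_mod_cast Nat.pos_of_ne_zero (NeZero.ne N)
  -- the Fourier multiplier bound
  have hGP : ∀ P : ZMod N × ZMod N, (G P).im = 0 ∧ c₀ ≤ (G P).re := by
    rintro ⟨p, q⟩
    have hφ : (p.val:ℝ)/N ∈ Set.Icc (0:ℝ) 1 :=
      ⟨div_nonneg (Nat.cast_nonneg _) h0N.le,
       (div_le_one h0N).mpr (by exact_mod_cast (ZMod.val_lt p).le)⟩
    have hθ : (q.val:ℝ)/N ∈ Set.Icc (0:ℝ) 1 :=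
      ⟨div_nonneg (Nat.cast_nonneg _) h0N.le,
       (div_le_one h0N).mpr (by exact_mod_cast (ZMod.val_lt q).le)⟩
    have h := hFourier ((p.val:ℝ)/N) ((q.val:ℝ)/N) hφ hθ
    have hEq : (∑ x : ZMod N, ∑ y : ZMod N, F x y *
        Complex.exp (2 * Real.pi * Complex.I *
          (((x.val : ℕ) : ℂ) * ((((p.val:ℝ)/N) : ℝ) : ℂ) -
           ((y.val : ℕ) : ℂ) * ((((q.val:ℝ)/N) : ℝ) : ℂ)))) = G (p, q) := by
      rw [hGdef]
      beta_reduce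
      rw [Fintype.sum_prod_type]
      exact Finset.sum_congr rfl fun x _ => Finset.sum_congr rfl fun y _ => by
        rw [ee_eq_exp]
    rwa [hEq] at h
  -- trace identities
  have htr1 : (N:ℂ)^2 * (R * Φ R).trace = ∑ P : ZMod N × ZMod N, G P * (Sf P * conj (Sf P)) := by
    rw [key_expand N F R]
    congr 1
    simp only [Matrix.trace, Matrix.diag, Matrix.mul_apply, hΦ R]
    simp only [Fintype.sum_prod_type, hRconj]
    exact (Finset.sum_comm).symm
  have htr2 : (N:ℂ)^2 * (R * R).trace = ∑ P : ZMod N × ZMod N, Sf P * conj (Sf P) := by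
    rw [parseval N R]
    congr 1
    simp only [Matrix.trace, Matrix.diag, Matrix.mul_apply]
    simp only [Fintype.sum_prod_type, hRconj]
    exact (Finset.sum_comm).symm
  have hcast : (N:ℂ)^2 = (((N:ℝ)^2 : ℝ) : ℂ) := by push_cast; ring
  have hN2 : (0:ℝ) < (N:ℝ)^2 := by positivity
  -- real part of Parseval
  have hT2 : (N:ℝ)^2 * ((R * R).trace).re = ∑ P : ZMod N × ZMod N, w P := by
    have h := congrArg Complex.re htr2
    rw [hcast] at h
    simp only [hwconj] at h
    rw [← Complex.ofReal_sum, Complex.re_ofReal_mul, Complex.ofReal_re] at h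
    exact h
  -- real and imaginary part of the main identity
  have htr1' : (N:ℂ)^2 * (R * Φ R).trace = ∑ P : ZMod N × ZMod N, G P * ((w P : ℝ) : ℂ) := by
    rw [htr1]; exact Finset.sum_congr rfl fun P _ => by rw [hwconj]
  have hIm : (N:ℝ)^2 * ((R * Φ R).trace).im = 0 := by
    have h := congrArg Complex.im htr1'
    rw [hcast] at h
    have : ∀ P : ZMod N × ZMod N, (G P * ((w P : ℝ) : ℂ)).im = 0 := by
      intro P
      rw [Complex.mul_im]
      simp [(hGP P).1]
    rw [Complex.im_sum, Finset.sum_congr rfl fun P _ => this P, Finset.sum_const_zero,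
      Complex.im_ofReal_mul] at h
    exact h
  have hRe : (N:ℝ)^2 * ((R * Φ R).trace).re = ∑ P : ZMod N × ZMod N, (G P).re * w P := by
    have h := congrArg Complex.re htr1'
    rw [hcast] at h
    have : ∀ P : ZMod N × ZMod N, (G P * ((w P : ℝ) : ℂ)).re = (G P).re * w P := by
      intro P
      rw [Complex.mul_re]
      simp
    rw [Complex.re_sum, Finset.sum_congr rfl fun P _ => this P, Complex.re_ofReal_mul] at h
    exact h
  constructor
  · have := hIm
    nlinarith [hN2]
  · have hsumle : c₀ * ∑ P : ZMod N × ZMod N, w P ≤ ∑ P : ZMod N × ZMod N, (G P).re * w P := by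
      rw [Finset.mul_sum]
      exact Finset.sum_le_sum fun P _ => mul_le_mul_of_nonneg_right (hGP P).2 (hwnn P)
    have key : (N:ℝ)^2 * (c₀ * ((R * R).trace).re) ≤ (N:ℝ)^2 * ((R * Φ R).trace).re := by
      rw [hRe]
      calc (N:ℝ)^2 * (c₀ * ((R * R).trace).re)
          = c₀ * ((N:ℝ)^2 * ((R * R).trace).re) := by ring
        _ = c₀ * ∑ P : ZMod N × ZMod N, w P := by rw [hT2]
        _ ≤ _ := hsumle
    exact le_of_mul_le_mul_left key hN2
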